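/- arXiv:2404.12589 — 2 statements merged into one kernel-verified Lean document; each statement's English description precedes it below -/
import Mathlib

section
/- Let 𝒳 = 𝒳⁽¹⁾ × ⋯ × 𝒳⁽ᵈ⁾ be a finite product state space, fix i ∈ ⟦d⟧, let π ∈ 𝒫(𝒳) be strictly positive, let P ∈ ℒ(𝒳) have strictly positive entries, and let L_j ∈ ℒ(𝒳⁽ʲ⁾) with strictly positive entries be prescribed for all j ≠ i. Let f(t) = (t^α − 1)/(α − 1) with α ∈ (0,1) ∪ (1,∞), which generates the α-divergence. Then the unique minimizer over L ∈ ℒ(𝒳⁽ⁱ⁾) of D_f^π(P ‖ (⊗_{j<i} L_j) ⊗ L ⊗ (⊗_{j>i} L_j)) is the transition matrix L⁽ⁱ⁾_* whose rows are given by L⁽ⁱ⁾_*(xⁱ,yⁱ) ∝ ( Σ_{x^{(−i)},y^{(−i)}} π(x) (∏_{j≠i} L_j(x^j,y^j))^{1−α} P(x,y)^α )^{1/α}, normalized so that each row sums to 1. -/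
open Filter Finset
open scoped Classical

/-- `p` is a probability mass on the finite set `Y`. -/
def IsProbMass {Y : Type*} [Fintype Y] (p : Y → ℝ) : Prop :=
  (∀ x, 0 ≤ p x) ∧ ∑ x, p x = 1

/-- `M` is a transition matrix (row-stochastic matrix) on the finite set `Y`. -/
def IsTransMat {Y : Type*} [Fintype Y] (M : Y → Y → ℝ) : Prop :=
  (∀ x y, 0 ≤ M x y) ∧ ∀ x, ∑ y, M x y = 1

/-- The tensor product `⊗ᵢ Lᵢ` of transition matrices on a finite product space. -/
noncomputable def tensorMat {d : ℕ} {X : Fin d → Type*} (L : ∀ i, X i → X i → ℝ) :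
    (∀ i, X i) → (∀ i, X i) → ℝ :=
  fun x y => ∏ i, L i (x i) (y i)

/-- `f'(∞) := lim_{x→0⁺} x f(1/x)`, as an extended real (realized as a limsup). -/
noncomputable def fPrimeInf (f : ℝ → ℝ) : EReal :=
  Filter.limsup (fun x : ℝ => ((x * f (1 / x) : ℝ) : EReal)) (nhdsWithin 0 (Set.Ioi 0))

/-- The term `L(x,y)·f(M(x,y)/L(x,y))` with the conventions `0·f(0/0) := 0` and
`0·f(a/0) := a·f'(∞)` for `a > 0`. -/
noncomputable def fDivTerm (f : ℝ → ℝ) (m l : ℝ) : EReal :=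
  if l = 0 then (if m = 0 then 0 else (m : EReal) * fPrimeInf f)
  else ((l * f (m / l) : ℝ) : EReal)

/-- The `f`-divergence `D_f^π(M ‖ L)` between transition matrices, with the convention
`0·∞ := 0` (EReal multiplication). -/
noncomputable def fDiv {Y : Type*} [Fintype Y] (f : ℝ → ℝ) (π : Y → ℝ) (M L : Y → Y → ℝ) :
    EReal :=
  ∑ x, (π x : EReal) * ∑ y, fDivTerm f (M x y) (L x y)

/-- `𝐙(x^{(−i)},y^{(−i)}) := ∏_{j ≠ i} L_j(x^j, y^j)`. -/
noncomputable def prodExceptI {d : ℕ} {X : Fin d → Type*} (i : Fin d)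
    (Lfam : ∀ j, X j → X j → ℝ) (x y : ∀ j, X j) : ℝ :=
  ∏ j ∈ Finset.univ.erase i, Lfam j (x j) (y j)

/-- `Z(xⁱ,yⁱ) := Σ_{x^{(−i)},y^{(−i)}} π(x)·𝐙(x^{(−i)},y^{(−i)})`. -/
noncomputable def zConst {d : ℕ} {X : Fin d → Type*} [∀ i, Fintype (X i)]
    (π : (∀ j, X j) → ℝ) (i : Fin d) (Lfam : ∀ j, X j → X j → ℝ) (xi yi : X i) : ℝ :=
  ∑ x : ∀ j, X j, ∑ y : ∀ j, X j,
    if x i = xi ∧ y i = yi then π x * prodExceptI i Lfam x y else 0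

/-- The row-normalized matrix with entries proportional to
`(Σ_{x^{(−i)},y^{(−i)}} π(x) (∏_{j≠i} L_j(x^j,y^j))^{1−α} P(x,y)^α)^{1/α}`. -/
noncomputable def alphaStar {d : ℕ} {X : Fin d → Type*} [∀ i, Fintype (X i)] (α : ℝ)
    (π : (∀ j, X j) → ℝ) (P : (∀ j, X j) → (∀ j, X j) → ℝ) (i : Fin d)
    (Lfam : ∀ j, X j → X j → ℝ) : X i → X i → ℝ :=
  fun xi yi =>
    (∑ x : ∀ j, X j, ∑ y : ∀ j, X j,
        if x i = xi ∧ y i = yi then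
          π x * prodExceptI i Lfam x y ^ (1 - α) * P x y ^ α else 0) ^ (1 / α) /
      ∑ zi : X i, (∑ x : ∀ j, X j, ∑ y : ∀ j, X j,
        if x i = xi ∧ y i = zi then
          π x * prodExceptI i Lfam x y ^ (1 - α) * P x y ^ α else 0) ^ (1 / α)

/-! ### Auxiliary lemmas -/

section Aux

open Topology

lemma ereal_coe_sum {ι : Type*} (s : Finset ι) (f : ι → ℝ) :
    ((∑ i ∈ s, f i : ℝ) : EReal) = ∑ i ∈ s, (f i : EReal) := by
  induction s using Finset.cons_induction with
  | empty => simp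
  | cons a s ha ih => rw [Finset.sum_cons, Finset.sum_cons, EReal.coe_add, ih]

lemma ereal_sum_ne_bot {ι : Type*} (s : Finset ι) (f : ι → EReal)
    (h : ∀ i ∈ s, f i ≠ ⊥) : ∑ i ∈ s, f i ≠ ⊥ := by
  induction s using Finset.cons_induction with
  | empty => simp
  | cons a s ha ih =>
    rw [Finset.sum_cons, Ne, EReal.add_eq_bot_iff]
    push_neg
    exact ⟨h a (Finset.mem_cons_self a s), ih fun i hi => h i (Finset.mem_cons_of_mem hi)⟩

lemma ereal_sum_eq_top {ι : Type*} (s : Finset ι) (f : ι → EReal)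
    (h : ∀ i ∈ s, f i ≠ ⊥) {i₀ : ι} (hi₀ : i₀ ∈ s) (htop : f i₀ = ⊤) :
    ∑ i ∈ s, f i = ⊤ := by
  rw [← Finset.add_sum_erase s f hi₀, htop, EReal.top_add_of_ne_bot]
  exact ereal_sum_ne_bot _ _ fun i hi => h i (Finset.mem_of_mem_erase hi)

lemma ereal_coe_mul_ne_bot {c : ℝ} (hc : 0 < c) {z : EReal} (hz : z ≠ ⊥) :
    (c : EReal) * z ≠ ⊥ := by
  induction z using EReal.rec with
  | bot => exact absurd rfl hz
  | coe r => rw [← EReal.coe_mul]; exact EReal.coe_ne_bot _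
  | top => rw [EReal.coe_mul_top_of_pos hc]; simp

lemma key_rw {α : ℝ} {x : ℝ} (hx : 0 < x) :
    x * ((1/x) ^ α - 1) / (α - 1) = (x ^ (1 - α) - x) / (α - 1) := by
  have h1 : (1/x) ^ α = (x ^ α)⁻¹ := by rw [one_div, Real.inv_rpow hx.le]
  have h2 : x ^ (1 - α : ℝ) = x / x ^ α := by
    rw [Real.rpow_sub hx, Real.rpow_one]
  have h3 : (0:ℝ) < x ^ α := Real.rpow_pos_of_pos hx α
  rw [h1, h2]
  field_simp

lemma fPrimeInf_lt {α : ℝ} (hα : α ∈ Set.Ioo (0:ℝ) 1) :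
    fPrimeInf (fun t => (t ^ α - 1) / (α - 1)) = 0 := by
  have hev : ∀ x ∈ Set.Ioi (0:ℝ),
      ((x * ((1/x) ^ α - 1) / (α - 1) : ℝ) : EReal)
        = (((x ^ (1 - α) - x) / (α - 1) : ℝ) : EReal) := by
    intro x hx
    rw [key_rw hx]
  have htt : Tendsto (fun x : ℝ => (((x ^ (1 - α) - x) / (α - 1) : ℝ) : EReal))
      (nhdsWithin 0 (Set.Ioi 0)) (𝓝 ((0:ℝ) : EReal)) := by
    rw [EReal.tendsto_coe]
    have h0 : Tendsto (fun x : ℝ => x ^ (1 - α)) (𝓝 0) (𝓝 0) := by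
      have := (Real.continuousAt_rpow_const 0 (1 - α) (Or.inr (by linarith [hα.2]))).tendsto
      simpa [Real.zero_rpow (by intro h; nlinarith [hα.2] : (1:ℝ) - α ≠ 0)] using this
    have : Tendsto (fun x : ℝ => (x ^ (1 - α) - x) / (α - 1)) (𝓝 0) (𝓝 0) := by
      have := (h0.sub tendsto_id).div_const (α - 1)
      simpa using this
    exact this.mono_left nhdsWithin_le_nhds
  unfold fPrimeInf
  rw [Filter.limsup_congr]
  · exact htt.limsup_eq
  · filter_upwards [eventually_nhdsWithin_of_forall hev] with x hx
    simpa [mul_div_assoc] using hx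

lemma fPrimeInf_gt {α : ℝ} (hα : 1 < α) :
    fPrimeInf (fun t => (t ^ α - 1) / (α - 1)) = ⊤ := by
  have hev : ∀ x ∈ Set.Ioi (0:ℝ),
      ((x * ((1/x) ^ α - 1) / (α - 1) : ℝ) : EReal)
        = (((x ^ (1 - α) - x) / (α - 1) : ℝ) : EReal) := by
    intro x hx
    rw [key_rw hx]
  have hreal : Tendsto (fun x : ℝ => (x ^ (1 - α) - x) / (α - 1))
      (nhdsWithin 0 (Set.Ioi 0)) atTop := by
    have h1 : Tendsto (fun x : ℝ => x ^ (1 - α)) (nhdsWithin 0 (Set.Ioi 0)) atTop := by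
      have h2 : Tendsto (fun x : ℝ => (x⁻¹) ^ (α - 1)) (nhdsWithin 0 (Set.Ioi 0)) atTop :=
        (tendsto_rpow_atTop (by linarith)).comp tendsto_inv_nhdsGT_zero
      refine h2.congr' ?_
      filter_upwards [self_mem_nhdsWithin] with x (hx : 0 < x)
      rw [Real.inv_rpow hx.le, ← Real.rpow_neg hx.le]
      congr 1; ring
    have h3 : Tendsto (fun x : ℝ => x ^ (1 - α) - x) (nhdsWithin 0 (Set.Ioi 0)) atTop := by
      have hx0 : Tendsto (fun x : ℝ => -x) (nhdsWithin 0 (Set.Ioi 0)) (𝓝 0) := by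
        have : Tendsto (fun x : ℝ => -x) (𝓝 0) (𝓝 0) := by
          simpa using (tendsto_id (α := ℝ) (x := 𝓝 0)).neg
        exact this.mono_left nhdsWithin_le_nhds
      simpa [sub_eq_add_neg] using h1.atTop_add hx0
    exact h3.atTop_div_const (by linarith)
  have htt : Tendsto (fun x : ℝ => (((x ^ (1 - α) - x) / (α - 1) : ℝ) : EReal))
      (nhdsWithin 0 (Set.Ioi 0)) (𝓝 ⊤) := by
    rw [EReal.tendsto_nhds_top_iff_real]
    intro r
    filter_upwards [hreal.eventually (eventually_gt_atTop r)] with x hx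
    exact_mod_cast hx
  unfold fPrimeInf
  rw [Filter.limsup_congr]
  · exact htt.limsup_eq
  · filter_upwards [eventually_nhdsWithin_of_forall hev] with x hx
    simpa [mul_div_assoc] using hx

lemma hoelder_key {Y : Type*} [Fintype Y] [Nonempty Y] {β : ℝ} (hβ0 : 0 < β) (hβ1 : β < 1)
    (w v : Y → ℝ) (hw : ∀ y, 0 < w y) (hv : ∀ y, 0 ≤ v y) :
    (∑ y, w y * v y ^ β ≤ (∑ y, w y) ^ (1 - β) * (∑ y, w y * v y) ^ β) ∧
    ((∑ y, w y * v y ^ β = (∑ y, w y) ^ (1 - β) * (∑ y, w y * v y) ^ β) →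
      ∀ y z : Y, v y = v z) := by
  have hW : 0 < ∑ y, w y := Finset.sum_pos (fun y _ => hw y) univ_nonempty
  set W := ∑ y, w y with hWdef
  set p : Y → ℝ := fun y => w y / W with hpdef
  have hp0 : ∀ y ∈ univ, (0:ℝ) < p y := fun y _ => div_pos (hw y) hW
  have hp1 : ∑ y, p y = 1 := by
    rw [hpdef]; simp only; rw [← Finset.sum_div]; field_simp; exact hWdef.symm
  have hmem : ∀ y ∈ (univ : Finset Y), v y ∈ Set.Ici (0:ℝ) := fun y _ => hv y
  have hcc := Real.strictConcaveOn_rpow hβ0 hβ1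
  have jensen : ∑ y, p y • (v y ^ β) ≤ (∑ y, p y • v y) ^ β :=
    hcc.concaveOn.le_map_sum (fun y _ => (hp0 y (mem_univ y)).le) hp1 hmem
  have hsv : (0:ℝ) ≤ ∑ y, w y * v y :=
    Finset.sum_nonneg fun y _ => mul_nonneg (hw y).le (hv y)
  have E1 : ∑ y, w y * v y ^ β = W * ∑ y, p y • (v y ^ β) := by
    rw [Finset.mul_sum]
    refine Finset.sum_congr rfl fun y _ => ?_
    rw [hpdef, smul_eq_mul]
    field_simp
  have E2 : (∑ y, p y • v y) = (∑ y, w y * v y) / W := by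
    rw [Finset.sum_div]
    refine Finset.sum_congr rfl fun y _ => ?_
    rw [hpdef, smul_eq_mul]; ring
  have E3 : W ^ (1 - β) * (∑ y, w y * v y) ^ β = W * (∑ y, p y • v y) ^ β := by
    rw [E2, Real.div_rpow hsv hW.le, Real.rpow_sub hW, Real.rpow_one]
    ring
  constructor
  · rw [E1, E3]
    exact mul_le_mul_of_nonneg_left jensen hW.le
  · intro heq y z
    rw [E1, E3] at heq
    have heq' : (∑ y, p y • v y) ^ β ≤ ∑ y, p y • (v y ^ β) :=
      le_of_eq (mul_left_cancel₀ hW.ne' heq).symm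
    exact hcc.eq_of_map_sum_eq hp0 hp1 hmem heq' (mem_univ y) (mem_univ z)

lemma row_lemma {Y : Type*} [Fintype Y] [Nonempty Y] {α : ℝ}
    (hα : α ∈ Set.Ioo (0:ℝ) 1 ∪ Set.Ioi 1) (A : Y → ℝ) (hA : ∀ y, 0 < A y) :
    (∑ y, (A y ^ (1/α) / ∑ z, A z ^ (1/α)) ^ (1 - α) * A y = (∑ z, A z ^ (1/α)) ^ α) ∧
    ∀ L : Y → ℝ, (∀ y, 0 ≤ L y) → (∑ y, L y = 1) → (1 < α → ∀ y, 0 < L y) →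
      ((α - 1) * (∑ z, A z ^ (1/α)) ^ α ≤ (α - 1) * ∑ y, L y ^ (1 - α) * A y) ∧
      (∑ y, L y ^ (1 - α) * A y = (∑ z, A z ^ (1/α)) ^ α →
        ∀ y, L y = A y ^ (1/α) / ∑ z, A z ^ (1/α)) := by
  have hα0 : 0 < α := by rcases hα with h | h; exacts [h.1, lt_trans one_pos h]
  set B : Y → ℝ := fun y => A y ^ (1/α) with hBdef
  have hB : ∀ y, 0 < B y := fun y => Real.rpow_pos_of_pos (hA y) _
  have hT : 0 < ∑ z, B z := Finset.sum_pos (fun y _ => hB y) univ_nonempty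
  set T := ∑ z, B z with hTdef
  have hBα : ∀ y, B y ^ α = A y := by
    intro y
    rw [hBdef, ← Real.rpow_mul (hA y).le, one_div_mul_cancel hα0.ne', Real.rpow_one]
  have hBpow : ∀ y, B y / B y ^ (1 - α) = A y := by
    intro y
    rw [← hBα y]
    calc B y / B y ^ (1-α) = B y ^ (1:ℝ) / B y ^ (1-α) := by rw [Real.rpow_one]
      _ = B y ^ ((1:ℝ) - (1-α)) := (Real.rpow_sub (hB y) _ _).symm
      _ = B y ^ α := by norm_num
  have hval : ∑ y, (B y / T) ^ (1 - α) * A y = T ^ α := by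
    have hterm : ∀ y, (B y / T) ^ (1 - α) * A y = B y / T ^ (1 - α) := by
      intro y
      rw [Real.div_rpow (hB y).le hT.le, ← hBpow y]
      have h1 : B y ^ (1-α) ≠ 0 := (Real.rpow_pos_of_pos (hB y) _).ne'
      have h2 : T ^ (1-α) ≠ 0 := (Real.rpow_pos_of_pos hT _).ne'
      field_simp
    rw [Finset.sum_congr rfl fun y _ => hterm y, ← Finset.sum_div, ← hTdef]
    rw [eq_comm]
    calc T ^ α = T ^ ((1:ℝ) - (1-α)) := by norm_num
      _ = T ^ (1:ℝ) / T ^ (1-α) := Real.rpow_sub hT _ _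
      _ = T / T ^ (1-α) := by rw [Real.rpow_one]
  refine ⟨hval, fun L hL0 hL1 hLpos => ?_⟩
  rcases hα with hlt | hgt
  · -- case α ∈ (0,1)
    set v : Y → ℝ := fun y => L y / B y with hvdef
    have hv0 : ∀ y, 0 ≤ v y := fun y => div_nonneg (hL0 y) (hB y).le
    have hwv : ∀ y, B y * v y ^ (1 - α) = L y ^ (1 - α) * A y := by
      intro y
      show B y * (L y / B y) ^ (1-α) = _
      rw [Real.div_rpow (hL0 y) (hB y).le, ← hBpow y]
      have h1 : B y ^ (1-α) ≠ 0 := (Real.rpow_pos_of_pos (hB y) _).ne'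
      field_simp
    have hLvB : ∀ y, B y * v y = L y := by
      intro y; show B y * (L y / B y) = L y; rw [mul_comm, div_mul_cancel₀ _ (hB y).ne']
    have hsum_wv : ∑ y, B y * v y = 1 := by
      rw [Finset.sum_congr rfl fun y _ => hLvB y]; exact hL1
    obtain ⟨hineq, heqc⟩ := hoelder_key (β := 1 - α) (by linarith [hlt.2]) (by linarith [hlt.1])
      B v hB hv0
    have hRHS : T ^ (1 - (1-α)) * (∑ y, B y * v y) ^ (1-α) = T ^ α := by
      rw [hsum_wv, Real.one_rpow, mul_one]; norm_num
    have key : ∑ y, L y ^ (1-α) * A y ≤ T ^ α := by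
      rw [← hRHS, ← Finset.sum_congr rfl fun y _ => hwv y]
      exact hineq
    refine ⟨mul_le_mul_of_nonpos_left key (by linarith [hlt.2]), fun heq y => ?_⟩
    have heq2 : ∑ y, B y * v y ^ (1-α) = T ^ (1 - (1-α)) * (∑ y, B y * v y) ^ (1-α) := by
      rw [hRHS, Finset.sum_congr rfl fun y _ => hwv y, heq]
    have hvc := heqc heq2
    have hLz : ∀ z, L z = v y * B z := by
      intro z
      rw [hvc y z, ← hLvB z, mul_comm]
    have hvyT : v y * T = 1 := by
      rw [hTdef, Finset.mul_sum, ← hL1]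
      exact (Finset.sum_congr rfl fun z _ => (hLz z).symm)
    rw [hLz y, eq_div_iff hT.ne']
    show v y * B y * T = B y
    rw [mul_comm (v y) (B y), mul_assoc, hvyT, mul_one]
  · -- case 1 < α
    have hgt' : (1:ℝ) < α := hgt
    have hL := hLpos hgt'
    set v : Y → ℝ := fun y => L y ^ (-α) * A y with hvdef
    have hv : ∀ y, 0 < v y := fun y => mul_pos (Real.rpow_pos_of_pos (hL y) _) (hA y)
    have hwv2 : ∀ y, L y * v y ^ (1/α) = B y := by
      intro y
      show L y * (L y ^ (-α) * A y) ^ (1/α) = B y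
      rw [Real.mul_rpow (Real.rpow_nonneg (hL y).le _) (hA y).le,
        ← Real.rpow_mul (hL y).le]
      have he : -α * (1/α) = (-1 : ℝ) := by field_simp
      rw [he, Real.rpow_neg_one]
      show L y * ((L y)⁻¹ * A y ^ (1/α)) = A y ^ (1/α)
      rw [← mul_assoc, mul_inv_cancel₀ (hL y).ne', one_mul]
    have hwv2' : ∀ y, L y * v y = L y ^ (1-α) * A y := by
      intro y
      show L y * (L y ^ (-α) * A y) = _
      have : L y ^ ((1:ℝ)-α) = L y * L y ^ (-α) := by
        calc L y ^ ((1:ℝ)-α) = L y ^ ((1:ℝ) + (-α)) := by rw [sub_eq_add_neg]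
          _ = L y ^ (1:ℝ) * L y ^ (-α) := Real.rpow_add (hL y) _ _
          _ = L y * L y ^ (-α) := by rw [Real.rpow_one]
      rw [this]; ring
    set S := ∑ y, L y ^ (1-α) * A y with hSdef
    have hS0 : 0 ≤ S :=
      Finset.sum_nonneg fun y _ => mul_nonneg (Real.rpow_nonneg (hL0 y) _) (hA y).le
    have hsum_Lv : ∑ y, L y * v y = S := Finset.sum_congr rfl fun y _ => hwv2' y
    obtain ⟨hineq, heqc⟩ := hoelder_key (β := 1/α) (by positivity) ((div_lt_one hα0).mpr hgt')
      L v hL (fun y => (hv y).le)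
    have hTle : T ≤ S ^ (1/α) := by
      calc T = ∑ y, L y * v y ^ (1/α) := (Finset.sum_congr rfl fun y _ => hwv2 y).symm
        _ ≤ (∑ y, L y) ^ (1 - 1/α) * (∑ y, L y * v y) ^ (1/α) := hineq
        _ = S ^ (1/α) := by rw [hL1, Real.one_rpow, one_mul, hsum_Lv]
    have key : T ^ α ≤ S := by
      have h2 := Real.rpow_le_rpow hT.le hTle hα0.le
      rwa [← Real.rpow_mul hS0, one_div_mul_cancel hα0.ne', Real.rpow_one] at h2
    refine ⟨mul_le_mul_of_nonneg_left key (by linarith [hgt']), fun heq y => ?_⟩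
    have hST : S ^ (1/α) = T := by
      rw [heq, ← Real.rpow_mul hT.le, mul_one_div_cancel hα0.ne', Real.rpow_one]
    have heq2 : ∑ y, L y * v y ^ (1/α) = (∑ y, L y) ^ (1 - 1/α) * (∑ y, L y * v y) ^ (1/α) := by
      rw [hL1, Real.one_rpow, one_mul, hsum_Lv, hST]
      exact Finset.sum_congr rfl fun z _ => hwv2 z
    have hvc := heqc heq2
    have hBz : ∀ z, B z = v y ^ (1/α) * L z := by
      intro z
      rw [← hwv2 z, hvc y z, mul_comm]
    have hTv : T = v y ^ (1/α) := by
      rw [hTdef, Finset.sum_congr rfl fun z _ => hBz z, ← Finset.mul_sum, hL1, mul_one]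
    rw [eq_div_iff hT.ne']
    show L y * T = B y
    rw [hBz y, hTv]
    ring

lemma tensor_fac {d : ℕ} {X : Fin d → Type*} [∀ i, Fintype (X i)] (i : Fin d)
    (Lfam : ∀ j, X j → X j → ℝ) (L : X i → X i → ℝ) (x y : ∀ j, X j) :
    tensorMat (Function.update Lfam i L) x y = L (x i) (y i) * prodExceptI i Lfam x y := by
  unfold tensorMat prodExceptI
  rw [← Finset.mul_prod_erase Finset.univ _ (Finset.mem_univ i), Function.update_self]
  congr 1
  refine Finset.prod_congr rfl fun j hj => ?_
  rw [Function.update_of_ne (Finset.ne_of_mem_erase hj)]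

lemma tensor_rowsum {d : ℕ} {X : Fin d → Type*} [∀ i, Fintype (X i)]
    (M : ∀ j, X j → X j → ℝ) (hM : ∀ j a, ∑ b, M j a b = 1) (x : ∀ j, X j) :
    ∑ y : ∀ j, X j, tensorMat M x y = 1 := by
  unfold tensorMat
  rw [← Fintype.prod_sum (fun j b => M j (x j) b)]
  exact Finset.prod_eq_one fun j _ => hM j (x j)

lemma collapse_sum {Y : Type*} [Fintype Y] (g : Y → Y → ℝ) (a b : Y) :
    ∑ c : Y, ∑ e : Y, (if a = c ∧ b = e then g c e else 0) = g a b := by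
  have h1 : ∀ c : Y, ∑ e : Y, (if a = c ∧ b = e then g c e else 0)
      = if a = c then g c b else 0 := by
    intro c
    by_cases hac : a = c
    · simp only [hac, true_and, if_true]
      exact Finset.sum_ite_eq Finset.univ b (g c) |>.trans (by simp)
    · simp [hac]
  rw [Finset.sum_congr rfl fun c _ => h1 c]
  exact Finset.sum_ite_eq Finset.univ a (fun c => g c b) |>.trans (by simp)

lemma sum_swap4 {A B : Type*} [Fintype A] [Fintype B] (F : A → A → B → B → ℝ) :
    ∑ a : A, ∑ b : A, ∑ x : B, ∑ y : B, F a b x y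
      = ∑ x : B, ∑ y : B, ∑ a : A, ∑ b : A, F a b x y := by
  calc ∑ a : A, ∑ b : A, ∑ x : B, ∑ y : B, F a b x y
      = ∑ a : A, ∑ x : B, ∑ b : A, ∑ y : B, F a b x y :=
        Finset.sum_congr rfl fun a _ => Finset.sum_comm
    _ = ∑ x : B, ∑ a : A, ∑ b : A, ∑ y : B, F a b x y := Finset.sum_comm
    _ = ∑ x : B, ∑ a : A, ∑ y : B, ∑ b : A, F a b x y :=
        Finset.sum_congr rfl fun x _ => Finset.sum_congr rfl fun a _ => Finset.sum_comm
    _ = ∑ x : B, ∑ y : B, ∑ a : A, ∑ b : A, F a b x y :=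
        Finset.sum_congr rfl fun x _ => Finset.sum_comm

lemma fDiv_compute {d : ℕ} {X : Fin d → Type*} [∀ i, Fintype (X i)] (i : Fin d) {α : ℝ}
    (hα : α ∈ Set.Ioo (0 : ℝ) 1 ∪ Set.Ioi (1 : ℝ))
    (π : (∀ j, X j) → ℝ)
    (P : (∀ j, X j) → (∀ j, X j) → ℝ) (hPpos : ∀ x y, 0 < P x y)
    (Lfam : ∀ j, X j → X j → ℝ) (hLfam : ∀ j, j ≠ i → ∀ a, ∑ b, Lfam j a b = 1)
    (hLpos : ∀ j, j ≠ i → ∀ a b, 0 < Lfam j a b)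
    (L : X i → X i → ℝ) (hL0 : ∀ a b, 0 ≤ L a b) (hL1 : ∀ a, ∑ b, L a b = 1)
    (hLp : 1 < α → ∀ a b, 0 < L a b) :
    fDiv (fun t => (t ^ α - 1) / (α - 1)) π P (tensorMat (Function.update Lfam i L)) =
      (((∑ a : X i, ∑ b : X i, L a b ^ (1 - α) *
          (∑ x : ∀ j, X j, ∑ y : ∀ j, X j,
            if x i = a ∧ y i = b then π x * prodExceptI i Lfam x y ^ (1 - α) * P x y ^ α else 0))
        - (∑ x : ∀ j, X j, π x)) / (α - 1) : ℝ) := by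
  have hα0 : 0 < α := by rcases hα with h | h; exacts [h.1, lt_trans one_pos h]
  have hα1 : α ≠ 1 := by
    rcases hα with h | h; exacts [h.2.ne, (ne_of_gt h)]
  have hZpos : ∀ x y : ∀ j, X j, 0 < prodExceptI i Lfam x y := fun x y =>
    Finset.prod_pos fun j hj => hLpos j (Finset.ne_of_mem_erase hj) _ _
  set Q := tensorMat (Function.update Lfam i L) with hQdef
  have hQfac : ∀ x y, Q x y = L (x i) (y i) * prodExceptI i Lfam x y := fun x y =>
    tensor_fac i Lfam L x y
  have hQ0 : ∀ x y, 0 ≤ Q x y := fun x y => by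
    rw [hQfac]; exact mul_nonneg (hL0 _ _) (hZpos x y).le
  have hQ1 : ∀ x, ∑ y, Q x y = 1 := by
    intro x
    refine tensor_rowsum _ (fun j a => ?_) x
    by_cases hj : j = i
    · subst hj; rw [Function.update_self]; exact hL1 a
    · rw [Function.update_of_ne hj]; exact hLfam j hj a
  have hterm : ∀ x y, fDivTerm (fun t => (t ^ α - 1) / (α - 1)) (P x y) (Q x y)
      = (((P x y ^ α * Q x y ^ (1 - α) - Q x y) / (α - 1) : ℝ) : EReal) := by
    intro x y
    by_cases hq : Q x y = 0
    · have hαlt : α < 1 := by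
        rcases hα with h | h
        · exact h.2
        · exfalso
          have := hLp h (x i) (y i)
          have := hZpos x y
          rw [hQfac] at hq
          nlinarith
      unfold fDivTerm
      rw [if_pos hq, if_neg (hPpos x y).ne', fPrimeInf_lt ⟨hα0, hαlt⟩, mul_zero, hq,
        Real.zero_rpow (by intro h; exact hα1 (by linarith) : (1:ℝ) - α ≠ 0)]
      norm_num
    · have hQpos : 0 < Q x y := lt_of_le_of_ne (hQ0 x y) (Ne.symm hq)
      unfold fDivTerm
      rw [if_neg hq, EReal.coe_eq_coe_iff]
      have h1 : (P x y / Q x y) ^ α = P x y ^ α / Q x y ^ α :=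
        Real.div_rpow (hPpos x y).le hQpos.le α
      have h2 : Q x y ^ ((1:ℝ) - α) = Q x y / Q x y ^ α := by
        rw [Real.rpow_sub hQpos, Real.rpow_one]
      have h3 : Q x y ^ α ≠ 0 := (Real.rpow_pos_of_pos hQpos α).ne'
      show Q x y * (((P x y / Q x y) ^ α - 1) / (α - 1))
        = (P x y ^ α * Q x y ^ (1 - α) - Q x y) / (α - 1)
      rw [h1, h2]
      field_simp
  have hfd : fDiv (fun t => (t ^ α - 1) / (α - 1)) π P Q
      = ((∑ x : ∀ j, X j, π x * ∑ y : ∀ j, X j,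
          (P x y ^ α * Q x y ^ (1 - α) - Q x y) / (α - 1) : ℝ) : EReal) := by
    unfold fDiv
    rw [ereal_coe_sum]
    refine Finset.sum_congr rfl fun x _ => ?_
    rw [EReal.coe_mul, ereal_coe_sum]
    congr 1
    exact Finset.sum_congr rfl fun y _ => (hterm x y)
  rw [hfd, EReal.coe_eq_coe_iff]
  have hx1 : ∀ x, ∑ y : ∀ j, X j, (P x y ^ α * Q x y ^ (1 - α) - Q x y) / (α - 1)
      = ((∑ y : ∀ j, X j, P x y ^ α * Q x y ^ (1 - α)) - 1) / (α - 1) := by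
    intro x
    rw [← Finset.sum_div, Finset.sum_sub_distrib, hQ1 x]
  rw [Finset.sum_congr rfl fun x _ => by rw [hx1 x]]
  have hstep : ∑ x : ∀ j, X j, π x * (((∑ y : ∀ j, X j, P x y ^ α * Q x y ^ (1 - α)) - 1) / (α - 1))
      = ((∑ x : ∀ j, X j, ∑ y : ∀ j, X j, π x * (P x y ^ α * Q x y ^ (1 - α)))
          - ∑ x : ∀ j, X j, π x) / (α - 1) := by
    have hc : α - 1 ≠ 0 := sub_ne_zero.2 hα1
    have e1 : ∀ x, π x * (((∑ y : ∀ j, X j, P x y ^ α * Q x y ^ (1 - α)) - 1) / (α - 1))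
        = ((∑ y : ∀ j, X j, π x * (P x y ^ α * Q x y ^ (1 - α))) - π x) / (α - 1) := by
      intro x
      rw [← Finset.mul_sum]
      field_simp
    rw [Finset.sum_congr rfl fun x _ => e1 x, ← Finset.sum_div, Finset.sum_sub_distrib]
  rw [hstep]
  congr 2
  rw [eq_comm]
  have hrhs : ∀ a b : X i, L a b ^ (1 - α) *
      (∑ x : ∀ j, X j, ∑ y : ∀ j, X j,
        if x i = a ∧ y i = b then π x * prodExceptI i Lfam x y ^ (1 - α) * P x y ^ α else 0)
      = ∑ x : ∀ j, X j, ∑ y : ∀ j, X j,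
        if x i = a ∧ y i = b then
          L (x i) (y i) ^ (1 - α) * (π x * prodExceptI i Lfam x y ^ (1 - α) * P x y ^ α)
        else 0 := by
    intro a b
    rw [Finset.mul_sum]
    refine Finset.sum_congr rfl fun x _ => ?_
    rw [Finset.mul_sum]
    refine Finset.sum_congr rfl fun y _ => ?_
    rw [mul_ite, mul_zero]
    by_cases h : x i = a ∧ y i = b
    · rw [if_pos h, if_pos h, h.1, h.2]
    · rw [if_neg h, if_neg h]
  calc ∑ a : X i, ∑ b : X i, L a b ^ (1 - α) *
      (∑ x : ∀ j, X j, ∑ y : ∀ j, X j,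
        if x i = a ∧ y i = b then π x * prodExceptI i Lfam x y ^ (1 - α) * P x y ^ α else 0)
      = ∑ a : X i, ∑ b : X i, ∑ x : ∀ j, X j, ∑ y : ∀ j, X j,
          (if x i = a ∧ y i = b then
            L (x i) (y i) ^ (1 - α) * (π x * prodExceptI i Lfam x y ^ (1 - α) * P x y ^ α)
          else 0) :=
        Finset.sum_congr rfl fun a _ => Finset.sum_congr rfl fun b _ => hrhs a b
    _ = ∑ x : ∀ j, X j, ∑ y : ∀ j, X j, ∑ a : X i, ∑ b : X i,
          (if x i = a ∧ y i = b then
            L (x i) (y i) ^ (1 - α) * (π x * prodExceptI i Lfam x y ^ (1 - α) * P x y ^ α)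
          else 0) := sum_swap4 _
    _ = ∑ x : ∀ j, X j, ∑ y : ∀ j, X j, π x * (P x y ^ α * Q x y ^ (1 - α)) := by
        refine Finset.sum_congr rfl fun x _ => Finset.sum_congr rfl fun y _ => ?_
        have hcol := collapse_sum (fun _ _ : X i =>
          L (x i) (y i) ^ (1 - α) * (π x * prodExceptI i Lfam x y ^ (1 - α) * P x y ^ α))
          (x i) (y i)
        rw [hcol, hQfac x y, Real.mul_rpow (hL0 _ _) (hZpos x y).le]
        ring

lemma fDiv_top {d : ℕ} {X : Fin d → Type*} [∀ i, Fintype (X i)] [Nonempty (∀ j, X j)]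
    (i : Fin d) {α : ℝ} (hgt : 1 < α)
    (π : (∀ j, X j) → ℝ) (hπpos : ∀ x, 0 < π x)
    (P : (∀ j, X j) → (∀ j, X j) → ℝ) (hPpos : ∀ x y, 0 < P x y)
    (Lfam : ∀ j, X j → X j → ℝ)
    (L : X i → X i → ℝ) {a b : X i} (hab : L a b = 0) :
    fDiv (fun t => (t ^ α - 1) / (α - 1)) π P (tensorMat (Function.update Lfam i L)) = ⊤ := by
  set f : ℝ → ℝ := fun t => (t ^ α - 1) / (α - 1) with hf
  set Q := tensorMat (Function.update Lfam i L) with hQdef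
  have hfp : fPrimeInf f = ⊤ := fPrimeInf_gt hgt
  set x₀ : ∀ j, X j := Function.update (Classical.arbitrary _) i a with hx₀def
  set y₀ : ∀ j, X j := Function.update (Classical.arbitrary _) i b with hy₀def
  have hQ0 : Q x₀ y₀ = 0 := by
    rw [hQdef, tensor_fac, hx₀def, hy₀def, Function.update_self, Function.update_self, hab,
      zero_mul]
  have hne_bot : ∀ x y, fDivTerm f (P x y) (Q x y) ≠ ⊥ := by
    intro x y
    unfold fDivTerm
    split_ifs with h1 h2
    · simp
    · rw [hfp, EReal.coe_mul_top_of_pos (hPpos x y)]; simp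
    · exact EReal.coe_ne_bot _
  have htop : fDivTerm f (P x₀ y₀) (Q x₀ y₀) = ⊤ := by
    unfold fDivTerm
    rw [if_pos hQ0, if_neg (hPpos x₀ y₀).ne', hfp, EReal.coe_mul_top_of_pos (hPpos x₀ y₀)]
  unfold fDiv
  refine ereal_sum_eq_top _ _ (fun x _ => ereal_coe_mul_ne_bot (hπpos x)
    (ereal_sum_ne_bot _ _ fun y _ => hne_bot x y)) (Finset.mem_univ x₀) ?_
  rw [ereal_sum_eq_top _ _ (fun y _ => hne_bot x₀ y) (Finset.mem_univ y₀) htop]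
  exact EReal.coe_mul_top_of_pos (hπpos x₀)

end Aux

/-- For the `α`-divergence (`f(t) = (t^α − 1)/(α − 1)`, `α ∈ (0,1) ∪ (1,∞)`), the unique
closest product chain with prescribed marginals `L_j`, `j ≠ i`, has `i`-th factor
`alphaStar α π P i Lfam`. -/
theorem stmt9 {d : ℕ} {X : Fin d → Type*} [∀ i, Fintype (X i)] (i : Fin d) (α : ℝ)
    (hα : α ∈ Set.Ioo (0 : ℝ) 1 ∪ Set.Ioi (1 : ℝ))
    (π : (∀ j, X j) → ℝ) (hπ : IsProbMass π) (hπpos : ∀ x, 0 < π x)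
    (P : (∀ j, X j) → (∀ j, X j) → ℝ) (hP : IsTransMat P) (hPpos : ∀ x y, 0 < P x y)
    (Lfam : ∀ j, X j → X j → ℝ) (hLfam : ∀ j, j ≠ i → IsTransMat (Lfam j))
    (hLpos : ∀ j, j ≠ i → ∀ a b, 0 < Lfam j a b) :
    IsTransMat (alphaStar α π P i Lfam) ∧
      ∀ L : X i → X i → ℝ, IsTransMat L →
        fDiv (fun t => (t ^ α - 1) / (α - 1)) π P
            (tensorMat (Function.update Lfam i (alphaStar α π P i Lfam))) ≤
          fDiv (fun t => (t ^ α - 1) / (α - 1)) π P (tensorMat (Function.update Lfam i L)) ∧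
        (fDiv (fun t => (t ^ α - 1) / (α - 1)) π P (tensorMat (Function.update Lfam i L)) =
            fDiv (fun t => (t ^ α - 1) / (α - 1)) π P
              (tensorMat (Function.update Lfam i (alphaStar α π P i Lfam))) →
          L = alphaStar α π P i Lfam) := by
  classical
  have hα0 : 0 < α := by rcases hα with h | h; exacts [h.1, lt_trans one_pos h]
  have hα1 : α ≠ 1 := by rcases hα with h | h; exacts [h.2.ne, ne_of_gt h]
  have hc : α - 1 ≠ 0 := sub_ne_zero.2 hα1
  haveI hne : Nonempty (∀ j, X j) := by
    by_contra h
    rw [not_nonempty_iff] at h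
    have h2 := hπ.2
    rw [Finset.univ_eq_empty, Finset.sum_empty] at h2
    exact one_ne_zero h2.symm
  haveI : Nonempty (X i) := ⟨Classical.arbitrary (∀ j, X j) i⟩
  set A : X i → X i → ℝ := fun a b => ∑ x : ∀ j, X j, ∑ y : ∀ j, X j,
    if x i = a ∧ y i = b then π x * prodExceptI i Lfam x y ^ (1 - α) * P x y ^ α else 0
    with hAdef
  have hZpos : ∀ x y : ∀ j, X j, 0 < prodExceptI i Lfam x y := fun x y =>
    Finset.prod_pos fun j hj => hLpos j (Finset.ne_of_mem_erase hj) _ _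
  have hApos : ∀ a b, 0 < A a b := by
    intro a b
    have hbody : ∀ x y : ∀ j, X j, (0:ℝ) ≤
        (if x i = a ∧ y i = b then π x * prodExceptI i Lfam x y ^ (1 - α) * P x y ^ α else 0) := by
      intro x y
      split_ifs
      · exact (mul_pos (mul_pos (hπpos x) (Real.rpow_pos_of_pos (hZpos x y) _))
          (Real.rpow_pos_of_pos (hPpos x y) _)).le
      · exact le_refl 0
    refine Finset.sum_pos' (fun x _ => Finset.sum_nonneg fun y _ => hbody x y) ?_
    refine ⟨Function.update (Classical.arbitrary _) i a, Finset.mem_univ _, ?_⟩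
    refine Finset.sum_pos' (fun y _ => hbody _ y)
      ⟨Function.update (Classical.arbitrary _) i b, Finset.mem_univ _, ?_⟩
    rw [if_pos ⟨Function.update_self _ _ _, Function.update_self _ _ _⟩]
    exact mul_pos (mul_pos (hπpos _) (Real.rpow_pos_of_pos (hZpos _ _) _))
      (Real.rpow_pos_of_pos (hPpos _ _) _)
  have hstar_eq : ∀ a b, alphaStar α π P i Lfam a b = A a b ^ (1/α) / ∑ z, A a z ^ (1/α) :=
    fun a b => rfl
  have hTpos : ∀ a, (0:ℝ) < ∑ z, A a z ^ (1/α) := fun a =>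
    Finset.sum_pos (fun z _ => Real.rpow_pos_of_pos (hApos a z) _) Finset.univ_nonempty
  have hstar_pos : ∀ a b, 0 < alphaStar α π P i Lfam a b := by
    intro a b
    rw [hstar_eq a b]
    exact div_pos (Real.rpow_pos_of_pos (hApos a b) _) (hTpos a)
  have hstar_rowsum : ∀ a, ∑ b, alphaStar α π P i Lfam a b = 1 := by
    intro a
    rw [Finset.sum_congr rfl fun b _ => hstar_eq a b, ← Finset.sum_div]
    exact div_self (hTpos a).ne'
  have hstar_trans : IsTransMat (alphaStar α π P i Lfam) :=
    ⟨fun a b => (hstar_pos a b).le, hstar_rowsum⟩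
  refine ⟨hstar_trans, fun L hL => ?_⟩
  have hrow := fun a : X i => row_lemma hα (fun b => A a b) (fun b => hApos a b)
  -- value of fDiv at the optimum
  have hD_star := fDiv_compute i hα π P hPpos Lfam (fun j hj a => (hLfam j hj).2 a) hLpos
    (alphaStar α π P i Lfam) (fun a b => (hstar_pos a b).le) hstar_rowsum
    (fun _ a b => hstar_pos a b)
  rw [hπ.2] at hD_star
  have hSstar : ∑ a : X i, ∑ b : X i, alphaStar α π P i Lfam a b ^ (1 - α) * A a b
      = ∑ a : X i, (∑ z, A a z ^ (1/α)) ^ α := by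
    refine Finset.sum_congr rfl fun a _ => ?_
    rw [Finset.sum_congr rfl fun b _ => by rw [hstar_eq a b]]
    exact (hrow a).1
  rw [show (∑ a : X i, ∑ b : X i, alphaStar α π P i Lfam a b ^ (1 - α) *
      (∑ x : ∀ j, X j, ∑ y : ∀ j, X j,
        if x i = a ∧ y i = b then π x * prodExceptI i Lfam x y ^ (1 - α) * P x y ^ α else 0))
      = ∑ a : X i, (∑ z, A a z ^ (1/α)) ^ α from hSstar] at hD_star
  by_cases hz : 1 < α ∧ ∃ a b, L a b = 0
  · obtain ⟨hgt, a, b, hab⟩ := hz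
    have hDL := fDiv_top i hgt π hπpos P hPpos Lfam L hab
    constructor
    · rw [hDL]; exact le_top
    · intro heq
      rw [hDL, hD_star] at heq
      exact absurd heq.symm (EReal.coe_ne_top _)
  · push_neg at hz
    have hLp : 1 < α → ∀ a b, 0 < L a b := fun h a b => (hL.1 a b).lt_of_ne' (hz h a b)
    have hD_L := fDiv_compute i hα π P hPpos Lfam (fun j hj a => (hLfam j hj).2 a) hLpos
      L hL.1 hL.2 hLp
    rw [hπ.2] at hD_L
    have hrow2 := fun a : X i => (hrow a).2 (fun b => L a b) (hL.1 a) (hL.2 a)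
      (fun h b => hLp h a b)
    have hrowineq : ∀ a : X i, (α - 1) * (∑ z, A a z ^ (1/α)) ^ α
        ≤ (α - 1) * ∑ b, L a b ^ (1 - α) * A a b := fun a => (hrow2 a).1
    have hkey : (α - 1) * ∑ a : X i, (∑ z, A a z ^ (1/α)) ^ α
        ≤ (α - 1) * ∑ a : X i, ∑ b, L a b ^ (1 - α) * A a b := by
      rw [Finset.mul_sum, Finset.mul_sum]
      exact Finset.sum_le_sum fun a _ => hrowineq a
    constructor
    · rw [hD_star, hD_L, EReal.coe_le_coe_iff]
      have hrw : ∀ t : ℝ, (t - 1) / (α - 1) = ((α - 1) * t - (α - 1)) / ((α - 1)^2) := by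
        intro t
        rw [div_eq_div_iff hc (pow_ne_zero 2 hc)]
        ring
      rw [hrw, hrw]
      rw [div_le_div_iff_of_pos_right (by positivity)]
      linarith [hkey]
    · intro heq
      rw [hD_star, hD_L, EReal.coe_eq_coe_iff] at heq
      have hSeq : ∑ a : X i, ∑ b, L a b ^ (1 - α) * A a b
          = ∑ a : X i, (∑ z, A a z ^ (1/α)) ^ α := by
        have h3 := congrArg (· * (α - 1)) heq
        rw [div_mul_cancel₀ _ hc, div_mul_cancel₀ _ hc] at h3
        linarith
      have hterm_eq : ∀ a ∈ (Finset.univ : Finset (X i)),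
          (α - 1) * (∑ z, A a z ^ (1/α)) ^ α = (α - 1) * ∑ b, L a b ^ (1 - α) * A a b := by
        refine (Finset.sum_eq_sum_iff_of_le fun a _ => hrowineq a).1 ?_
        rw [← Finset.mul_sum, ← Finset.mul_sum, hSeq]
      funext a b
      have hrow_eq : ∑ b, L a b ^ (1 - α) * A a b = (∑ z, A a z ^ (1/α)) ^ α :=
        (mul_left_cancel₀ hc (hterm_eq a (Finset.mem_univ a))).symm
      rw [hstar_eq a b]
      exact (hrow2 a).2 hrow_eq b
end

section
/- (Decomposition of the distance to independence.) Let 𝒳 = 𝒳⁽¹⁾ × ⋯ × 𝒳⁽ᵈ⁾ be a finite product state space, (Sᵢ)_{i=1}^n a partition of ⟦d⟧ into nonempty mutually disjoint blocks, π ∈ 𝒫(𝒳) strictly positive, and P ∈ ℒ(𝒳). Then 𝕀^π(P) = D_KL^π(P ‖ ⊗_{i=1}^n P_π^{(Sᵢ)}) + Σ_{i=1}^n 𝕀^{π^{(Sᵢ)}}(P_π^{(Sᵢ)}); that is, the distance to independence of P equals the distance to (Sᵢ)-factorizability of P plus the sum of the distances to independence of the keep-Sᵢ-in transition matrices. -/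
open Filter Finset
open scoped Classical

/-- The term `M(x,y)·ln(M(x,y)/L(x,y))` with the conventions `0·ln(0/·) := 0` and
`a·ln(a/0) := +∞` for `a > 0`. -/
noncomputable def klTerm (m l : ℝ) : EReal :=
  if m = 0 then 0 else if l = 0 then ⊤ else ((m * Real.log (m / l) : ℝ) : EReal)

/-- The KL divergence `D_KL^π(M ‖ L)` between transition matrices, with the convention
`0·∞ := 0` (EReal multiplication). -/
noncomputable def klDiv {Y : Type*} [Fintype Y] (π : Y → ℝ) (M L : Y → Y → ℝ) : EReal :=
  ∑ x, (π x : EReal) * ∑ y, klTerm (M x y) (L x y)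

/-- The marginal `π⁽ˢ⁾` of `π` on the coordinates in `S`. -/
noncomputable def margS {d : ℕ} {X : Fin d → Type*} [∀ i, Fintype (X i)]
    (π : (∀ i, X i) → ℝ) (S : Finset (Fin d)) : (∀ j : S, X j.1) → ℝ :=
  fun xs => ∑ x : ∀ i, X i, if ∀ j : S, x j.1 = xs j then π x else 0

/-- The keep-`S`-in transition matrix `P_π⁽ˢ⁾` of `P` with respect to `π`. -/
noncomputable def keepS {d : ℕ} {X : Fin d → Type*} [∀ i, Fintype (X i)]
    (π : (∀ i, X i) → ℝ) (P : (∀ i, X i) → (∀ i, X i) → ℝ) (S : Finset (Fin d)) :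
    (∀ j : S, X j.1) → (∀ j : S, X j.1) → ℝ :=
  fun xs ys =>
    (∑ x : ∀ i, X i, ∑ y : ∀ i, X i,
        if (∀ j : S, x j.1 = xs j) ∧ (∀ j : S, y j.1 = ys j) then π x * P x y else 0) /
      margS π S xs

/-- The distance to independence `𝕀^π(P)` with respect to the KL divergence. -/
noncomputable def distIndepKL {d : ℕ} {X : Fin d → Type*} [∀ i, Fintype (X i)]
    (π : (∀ i, X i) → ℝ) (P : (∀ i, X i) → (∀ i, X i) → ℝ) : EReal :=
  ⨅ (L : ∀ i, X i → X i → ℝ) (_ : ∀ i, IsTransMat (L i)), klDiv π P (tensorMat L)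

/-- The distance to independence `𝕀^μ(Q)` of a transition matrix `Q` on the product
space `𝒳⁽ˢ⁾ = ∏_{j ∈ S} 𝒳⁽ʲ⁾`, with respect to the KL divergence. -/
noncomputable def distIndepOn {d : ℕ} {X : Fin d → Type*} [∀ i, Fintype (X i)]
    (S : Finset (Fin d)) (μ : (∀ j : S, X j.1) → ℝ)
    (Q : (∀ j : S, X j.1) → (∀ j : S, X j.1) → ℝ) : EReal :=
  ⨅ (L : ∀ j : S, X j.1 → X j.1 → ℝ) (_ : ∀ j, IsTransMat (L j)),
    klDiv μ Q fun xs ys => ∏ j, L j (xs j) (ys j)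

/-- The restriction of `x` to the coordinates in `S`. -/
noncomputable def restr {d : ℕ} {X : Fin d → Type*} (S : Finset (Fin d)) (x : ∀ i, X i) :
    ∀ j : S, X j.1 :=
  fun j => x j.1

/-- The tensor product over the blocks `S i` of transition matrices `L i` on `𝒳^{(S i)}`. -/
noncomputable def tensorBlocks {d n : ℕ} {X : Fin d → Type*} (S : Fin n → Finset (Fin d))
    (L : ∀ i : Fin n, (∀ j : S i, X j.1) → (∀ j : S i, X j.1) → ℝ) :
    (∀ i, X i) → (∀ i, X i) → ℝ :=
  fun x y => ∏ i, L i (restr (S i) x) (restr (S i) y)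

set_option linter.unusedSectionVars false

noncomputable def klR (m l : ℝ) : ℝ := if m = 0 then 0 else m * Real.log (m / l)

noncomputable def klDivR {Y : Type*} [Fintype Y] (π : Y → ℝ) (M L : Y → Y → ℝ) : ℝ :=
  ∑ x, π x * ∑ y, klR (M x y) (L x y)

lemma ecoe_sum {α : Type*} (s : Finset α) (f : α → ℝ) :
    ((∑ a ∈ s, f a : ℝ) : EReal) = ∑ a ∈ s, (f a : EReal) :=
  map_sum (⟨⟨(Real.toEReal), EReal.coe_zero⟩, EReal.coe_add⟩ : ℝ →+ EReal) f s

lemma klTerm_ne_bot (m l : ℝ) : klTerm m l ≠ ⊥ := by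
  unfold klTerm; split_ifs <;> simp [← EReal.coe_mul]

lemma esum_ne_bot {α : Type*} {s : Finset α} {f : α → EReal} (h : ∀ a ∈ s, f a ≠ ⊥) :
    ∑ a ∈ s, f a ≠ ⊥ := by
  classical
  induction s using Finset.cons_induction with
  | empty => simp
  | cons a s ha ih =>
      rw [Finset.sum_cons, Ne, EReal.add_eq_bot_iff]
      push_neg
      exact ⟨h a (Finset.mem_cons_self a s), ih fun b hb => h b (Finset.mem_cons.2 (Or.inr hb))⟩

lemma esum_eq_top {α : Type*} {s : Finset α} {f : α → EReal} (h : ∀ a ∈ s, f a ≠ ⊥)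
    {a : α} (ha : a ∈ s) (hta : f a = ⊤) : ∑ a ∈ s, f a = ⊤ := by
  rw [← Finset.add_sum_erase s f ha, hta,
    EReal.top_add_of_ne_bot (esum_ne_bot fun b hb => h b (Finset.mem_of_mem_erase hb))]

lemma ecoe_mul_ne_bot {r : ℝ} (hr : 0 ≤ r) {x : EReal} (hx : x ≠ ⊥) : (r : EReal) * x ≠ ⊥ := by
  induction x with
  | bot => exact absurd rfl hx
  | coe s => rw [← EReal.coe_mul]; exact EReal.coe_ne_bot _
  | top =>
      rcases hr.eq_or_lt with h | h
      · rw [← h]; simp [EReal.zero_mul]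
      · rw [EReal.coe_mul_top_of_pos h]; simp

lemma klTerm_coe {m l : ℝ} (h : m ≠ 0 → l ≠ 0) : klTerm m l = ((klR m l : ℝ) : EReal) := by
  unfold klTerm klR
  split_ifs with h1 h2
  · simp
  · exact absurd h2 (h h1)
  · rfl

lemma klDiv_coe {Y : Type*} [Fintype Y] (π : Y → ℝ) (M L : Y → Y → ℝ)
    (h : ∀ x y, M x y ≠ 0 → L x y ≠ 0) :
    klDiv π M L = ((klDivR π M L : ℝ) : EReal) := by
  unfold klDiv klDivR
  rw [ecoe_sum]
  refine Finset.sum_congr rfl fun x _ => ?_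
  rw [EReal.coe_mul, ecoe_sum]
  refine congrArg _ (Finset.sum_congr rfl fun y _ => ?_)
  exact klTerm_coe (h x y)

lemma klDiv_eq_top {Y : Type*} [Fintype Y] (π : Y → ℝ) (M L : Y → Y → ℝ)
    (hπ : ∀ a, 0 < π a) {x0 y0 : Y} (hM : M x0 y0 ≠ 0) (hL : L x0 y0 = 0) :
    klDiv π M L = ⊤ := by
  unfold klDiv
  have hinner : ∀ x : Y, (∑ y, klTerm (M x y) (L x y)) ≠ ⊥ :=
    fun x => esum_ne_bot fun y _ => klTerm_ne_bot _ _
  refine esum_eq_top (fun x _ => ecoe_mul_ne_bot (hπ x).le (hinner x)) (Finset.mem_univ x0) ?_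
  have h1 : (∑ y, klTerm (M x0 y) (L x0 y)) = ⊤ := by
    refine esum_eq_top (fun y _ => klTerm_ne_bot _ _) (Finset.mem_univ y0) ?_
    unfold klTerm
    rw [if_neg hM, if_pos hL]
  rw [h1, EReal.coe_mul_top_of_pos (hπ x0)]

set_option linter.unusedSectionVars false



section Marg

variable {d : ℕ} {X : Fin d → Type*} [∀ i, Fintype (X i)]
  (π : (∀ i, X i) → ℝ) (P : (∀ i, X i) → (∀ i, X i) → ℝ) (S : Finset (Fin d))

lemma restr_eq_iff {x : ∀ i, X i} {xs : ∀ j : S, X j.1} :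
    (∀ j : S, x j.1 = xs j) ↔ restr S x = xs :=
  ⟨fun h => funext h, fun h j => by rw [← h]; rfl⟩

lemma margS_apply (xs : ∀ j : S, X j.1) :
    margS π S xs = ∑ x, if restr S x = xs then π x else 0 := by
  unfold margS
  exact Finset.sum_congr rfl fun x _ => if_congr (restr_eq_iff S) rfl rfl

noncomputable def numS (xs ys : ∀ j : S, X j.1) : ℝ :=
  ∑ x : ∀ i, X i, ∑ y : ∀ i, X i,
    if (∀ j : S, x j.1 = xs j) ∧ (∀ j : S, y j.1 = ys j) then π x * P x y else 0

lemma keepS_eq (xs ys : ∀ j : S, X j.1) :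
    keepS π P S xs ys = numS π P S xs ys / margS π S xs := rfl

lemma numS_apply (xs ys : ∀ j : S, X j.1) :
    numS π P S xs ys =
      ∑ x, ∑ y, if restr S x = xs ∧ restr S y = ys then π x * P x y else 0 := by
  unfold numS
  exact Finset.sum_congr rfl fun x _ => Finset.sum_congr rfl fun y _ =>
    if_congr (and_congr (restr_eq_iff S) (restr_eq_iff S)) rfl rfl

variable {π} (hpos : ∀ x, 0 < π x)

include hpos

lemma nonempty_of_pos (hs : ∑ x, π x = 1) : Nonempty (∀ i, X i) := by
  by_contra h
  rw [not_nonempty_iff] at h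
  rw [Finset.univ_eq_empty, Finset.sum_empty] at hs
  norm_num at hs

lemma margS_pos [Nonempty (∀ i, X i)] (xs : ∀ j : S, X j.1) : 0 < margS π S xs := by
  obtain ⟨x0⟩ := (inferInstance : Nonempty (∀ i, X i))
  rw [margS_apply]
  refine Finset.sum_pos' (fun x _ => by split_ifs with h; exacts [(hpos x).le, le_rfl]) ?_
  refine ⟨fun i => if h : i ∈ S then xs ⟨i, h⟩ else x0 i, Finset.mem_univ _, ?_⟩
  rw [if_pos (funext fun j => by simp [restr, j.2])]
  exact hpos _

end Marg

section Keep

variable {d : ℕ} {X : Fin d → Type*} [∀ i, Fintype (X i)]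
  {π : (∀ i, X i) → ℝ} {P : (∀ i, X i) → (∀ i, X i) → ℝ} (S : Finset (Fin d))
  (hpos : ∀ x, 0 < π x) (hP : (∀ x y, 0 ≤ P x y) ∧ ∀ x, ∑ y, P x y = 1)
  [Nonempty (∀ i, X i)]

include hpos

lemma margS_mul_keepS (xs ys : ∀ j : S, X j.1) :
    margS π S xs * keepS π P S xs ys = numS π P S xs ys := by
  rw [keepS_eq, mul_div_cancel₀ _ (margS_pos S hpos xs).ne']

include hP

lemma numS_nonneg (xs ys : ∀ j : S, X j.1) : 0 ≤ numS π P S xs ys := by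
  refine Finset.sum_nonneg fun x _ => Finset.sum_nonneg fun y _ => ?_
  split_ifs
  · exact mul_nonneg (hpos x).le (hP.1 x y)
  · exact le_rfl

lemma keepS_nonneg (xs ys : ∀ j : S, X j.1) : 0 ≤ keepS π P S xs ys :=
  div_nonneg (numS_nonneg S hpos hP xs ys) (margS_pos S hpos xs).le

lemma numS_rowsum (xs : ∀ j : S, X j.1) :
    ∑ ys, numS π P S xs ys = margS π S xs := by
  have h1 : ∀ ys, numS π P S xs ys =
      ∑ x, ∑ y, if restr S x = xs ∧ restr S y = ys then π x * P x y else 0 :=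
    numS_apply π P S xs
  simp only [h1]
  rw [Finset.sum_comm]
  refine Finset.sum_congr rfl fun x _ => ?_
  rw [Finset.sum_comm]
  have h2 : ∀ y : ∀ i, X i,
      (∑ ys, if restr S x = xs ∧ restr S y = ys then π x * P x y else 0) =
        if restr S x = xs then π x * P x y else 0 := by
    intro y
    by_cases hA : restr S x = xs
    · simp only [hA, true_and, if_true]
      exact Finset.sum_ite_eq Finset.univ (restr S y) (fun _ => π x * P x y) |>.trans
        (if_pos (Finset.mem_univ _))
    · simp [hA]
  simp only [h2]
  have h3 : ∀ x : ∀ i, X i,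
      (∑ y, if restr S x = xs then π x * P x y else 0) = if restr S x = xs then π x else 0 := by
    intro x
    by_cases hA : restr S x = xs
    · simp only [hA, if_true, ← Finset.mul_sum, hP.2 x, mul_one]
    · simp [hA]
  simp only [h3]
  exact if_congr (restr_eq_iff S).symm rfl rfl

lemma keepS_rowsum (xs : ∀ j : S, X j.1) : ∑ ys, keepS π P S xs ys = 1 := by
  simp only [keepS_eq, ← Finset.sum_div, numS_rowsum S hpos hP]
  exact div_self (margS_pos S hpos xs).ne'

lemma keepS_pos {x y : ∀ i, X i} (hxy : P x y ≠ 0) :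
    0 < keepS π P S (restr S x) (restr S y) := by
  refine div_pos ?_ (margS_pos S hpos _)
  refine Finset.sum_pos' (fun a _ => Finset.sum_nonneg fun b _ => ?_) ⟨x, Finset.mem_univ _, ?_⟩
  · split_ifs
    · exact mul_nonneg (hpos a).le (hP.1 a b)
    · exact le_rfl
  · refine Finset.sum_pos' (fun b _ => ?_) ⟨y, Finset.mem_univ _, ?_⟩
    · split_ifs with h
      · exact (mul_nonneg (hpos x).le (hP.1 x b))
      · exact le_rfl
    · rw [if_pos ⟨fun j => rfl, fun j => rfl⟩]
      exact mul_pos (hpos x) (lt_of_le_of_ne (hP.1 x y) (Ne.symm hxy))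

lemma keepS_ne_zero {xs ys : ∀ j : S, X j.1} (h : keepS π P S xs ys ≠ 0) :
    ∃ x y, restr S x = xs ∧ restr S y = ys ∧ P x y ≠ 0 := by
  have hnum : numS π P S xs ys ≠ 0 := by
    intro h0
    rw [keepS_eq, h0, zero_div] at h
    exact h rfl
  rw [numS_apply] at hnum
  obtain ⟨x, -, hx⟩ := Finset.exists_ne_zero_of_sum_ne_zero hnum
  obtain ⟨y, -, hy⟩ := Finset.exists_ne_zero_of_sum_ne_zero hx
  by_cases hc : restr S x = xs ∧ restr S y = ys
  · refine ⟨x, y, hc.1, hc.2, fun h0 => hy ?_⟩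
    rw [if_pos hc, h0, mul_zero]
  · rw [if_neg hc] at hy
    exact absurd rfl hy

end Keep

section MargSum

variable {d : ℕ} {X : Fin d → Type*} [∀ i, Fintype (X i)]
  {π : (∀ i, X i) → ℝ} {P : (∀ i, X i) → (∀ i, X i) → ℝ} (S : Finset (Fin d))
  (hpos : ∀ x, 0 < π x) [Nonempty (∀ i, X i)]

include hpos

/-- Marginalization: sums against the keep-S-in matrix pull back to sums against `π, P`. -/
lemma marg_sum (G : (∀ j : S, X j.1) → (∀ j : S, X j.1) → ℝ) :
    ∑ xs, margS π S xs * ∑ ys, keepS π P S xs ys * G xs ys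
      = ∑ x, π x * ∑ y, P x y * G (restr S x) (restr S y) := by
  have step1 : ∀ xs, margS π S xs * ∑ ys, keepS π P S xs ys * G xs ys
      = ∑ ys, numS π P S xs ys * G xs ys := by
    intro xs
    rw [Finset.mul_sum]
    exact Finset.sum_congr rfl fun ys _ => by
      rw [← mul_assoc, margS_mul_keepS S hpos]
  simp only [step1, numS_apply, Finset.sum_mul, ite_mul, zero_mul]
  have inner2 : ∀ x y : ∀ i, X i,
      (∑ xs, ∑ ys, if restr S x = xs ∧ restr S y = ys then π x * P x y * G xs ys else 0)
        = π x * (P x y * G (restr S x) (restr S y)) := by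
    intro x y
    have h1 : ∀ xs, (∑ ys, if restr S x = xs ∧ restr S y = ys then π x * P x y * G xs ys else 0)
        = if restr S x = xs then π x * P x y * G xs (restr S y) else 0 := by
      intro xs
      by_cases hA : restr S x = xs
      · simp only [hA, true_and, if_true]
        exact (Finset.sum_ite_eq Finset.univ (restr S y)
          (fun ys => π x * P x y * G xs ys)).trans (if_pos (Finset.mem_univ _))
      · simp [hA]
    simp only [h1]
    rw [(Finset.sum_ite_eq Finset.univ (restr S x)
      (fun xs => π x * P x y * G xs (restr S y))), if_pos (Finset.mem_univ _), mul_assoc]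
  calc
    ∑ xs, ∑ ys, ∑ x, ∑ y,
        (if restr S x = xs ∧ restr S y = ys then π x * P x y * G xs ys else 0)
      = ∑ xs, ∑ x, ∑ ys, ∑ y,
        (if restr S x = xs ∧ restr S y = ys then π x * P x y * G xs ys else 0) :=
        Finset.sum_congr rfl fun xs _ => Finset.sum_comm
    _ = ∑ x, ∑ xs, ∑ ys, ∑ y,
        (if restr S x = xs ∧ restr S y = ys then π x * P x y * G xs ys else 0) :=
        Finset.sum_comm
    _ = ∑ x, ∑ xs, ∑ y, ∑ ys,
        (if restr S x = xs ∧ restr S y = ys then π x * P x y * G xs ys else 0) :=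
        Finset.sum_congr rfl fun x _ => Finset.sum_congr rfl fun xs _ => Finset.sum_comm
    _ = ∑ x, ∑ y, ∑ xs, ∑ ys,
        (if restr S x = xs ∧ restr S y = ys then π x * P x y * G xs ys else 0) :=
        Finset.sum_congr rfl fun x _ => Finset.sum_comm
    _ = ∑ x, ∑ y, π x * (P x y * G (restr S x) (restr S y)) :=
        Finset.sum_congr rfl fun x _ => Finset.sum_congr rfl fun y _ => inner2 x y
    _ = ∑ x, π x * ∑ y, P x y * G (restr S x) (restr S y) := by
        simp only [Finset.mul_sum]

end MargSum



section Core

variable {d n : ℕ} {X : Fin d → Type*} [∀ i, Fintype (X i)]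
  (S : Fin n → Finset (Fin d))
  (hdisj : ∀ i i', i ≠ i' → Disjoint (S i) (S i'))
  (hcov : ∀ j : Fin d, ∃ i, j ∈ S i)

include hdisj hcov in
lemma prodPartitionBlocks (f : Fin d → ℝ) :
    ∏ j, f j = ∏ i, ∏ j : S i, f j.1 := by
  have huniv : (Finset.univ : Finset (Fin d)) = Finset.univ.biUnion S := by
    ext j
    simp only [Finset.mem_univ, Finset.mem_biUnion, true_iff]
    obtain ⟨i, hi⟩ := hcov j
    exact ⟨i, by simp [hi]⟩
  rw [huniv, Finset.prod_biUnion (fun i _ i' _ h => hdisj i i' h)]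
  exact Finset.prod_congr rfl fun i _ => (Finset.prod_coe_sort _ _).symm

include hdisj hcov in
lemma tensorMat_eq_blocks (L : ∀ j : Fin d, X j → X j → ℝ) :
    tensorMat L = tensorBlocks S
      (fun i xs ys => ∏ j : S i, L j.1 (xs j) (ys j)) := by
  funext x y
  exact prodPartitionBlocks S hdisj hcov (fun j => L j (x j) (y j))

variable {π : (∀ i, X i) → ℝ} {P : (∀ i, X i) → (∀ i, X i) → ℝ}
  (hpos : ∀ x, 0 < π x)
  (hP : (∀ x y, 0 ≤ P x y) ∧ ∀ x, ∑ y, P x y = 1)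
  [Nonempty (∀ i, X i)]

include hpos

lemma klDivR_keep (T : Finset (Fin d)) (Λ : (∀ j : T, X j.1) → (∀ j : T, X j.1) → ℝ) :
    klDivR (margS π T) (keepS π P T) Λ
      = ∑ x, π x * ∑ y, P x y *
          (if keepS π P T (restr T x) (restr T y) = 0 then 0
            else Real.log (keepS π P T (restr T x) (restr T y) / Λ (restr T x) (restr T y))) := by
  rw [← marg_sum T hpos
    (fun xs ys => if keepS π P T xs ys = 0 then 0 else Real.log (keepS π P T xs ys / Λ xs ys))]
  unfold klDivR
  refine Finset.sum_congr rfl fun xs _ => ?_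
  congr 1
  refine Finset.sum_congr rfl fun ys _ => ?_
  unfold klR
  by_cases h : keepS π P T xs ys = 0 <;> simp [h]

include hP

/-- The core decomposition identity at the level of real-valued KL divergences. -/
lemma core_identity (Λ : ∀ i : Fin n, (∀ j : S i, X j.1) → (∀ j : S i, X j.1) → ℝ)
    (hΛnn : ∀ i xs ys, 0 ≤ Λ i xs ys)
    (hΛ : ∀ x y, P x y ≠ 0 → ∀ i, Λ i (restr (S i) x) (restr (S i) y) ≠ 0) :
    klDivR π P (tensorBlocks S Λ)
      = klDivR π P (tensorBlocks S (fun i => keepS π P (S i)))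
        + ∑ i, klDivR (margS π (S i)) (keepS π P (S i)) (Λ i) := by
  have hkrw : ∀ i, klDivR (margS π (S i)) (keepS π P (S i)) (Λ i)
      = ∑ x, π x * ∑ y, P x y *
          (if keepS π P (S i) (restr (S i) x) (restr (S i) y) = 0 then 0
            else Real.log (keepS π P (S i) (restr (S i) x) (restr (S i) y) /
              Λ i (restr (S i) x) (restr (S i) y))) :=
    fun i => klDivR_keep hpos (S i) (Λ i)
  simp only [hkrw]
  rw [Finset.sum_comm]
  -- push the ∑ i inside
  have hpush : ∀ x : ∀ i, X i,
      (∑ i, π x * ∑ y, P x y *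
          (if keepS π P (S i) (restr (S i) x) (restr (S i) y) = 0 then 0
            else Real.log (keepS π P (S i) (restr (S i) x) (restr (S i) y) /
              Λ i (restr (S i) x) (restr (S i) y))))
        = π x * ∑ y, P x y * ∑ i,
          (if keepS π P (S i) (restr (S i) x) (restr (S i) y) = 0 then 0
            else Real.log (keepS π P (S i) (restr (S i) x) (restr (S i) y) /
              Λ i (restr (S i) x) (restr (S i) y))) := by
    intro x
    rw [← Finset.mul_sum, Finset.sum_comm]
    congr 1
    refine Finset.sum_congr rfl fun y _ => ?_
    rw [← Finset.mul_sum]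
  simp only [hpush]
  unfold klDivR
  rw [← Finset.sum_add_distrib]
  refine Finset.sum_congr rfl fun x _ => ?_
  rw [← mul_add, ← Finset.sum_add_distrib]
  congr 1
  refine Finset.sum_congr rfl fun y _ => ?_
  -- pointwise identity
  by_cases hPxy : P x y = 0
  · simp [klR, hPxy]
  · have hPpos : 0 < P x y := lt_of_le_of_ne (hP.1 x y) (Ne.symm hPxy)
    have hkpos : ∀ i, 0 < keepS π P (S i) (restr (S i) x) (restr (S i) y) :=
      fun i => keepS_pos (S i) hpos hP hPxy
    have hΛpos : ∀ i, 0 < Λ i (restr (S i) x) (restr (S i) y) :=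
      fun i => lt_of_le_of_ne (hΛnn i _ _) (Ne.symm (hΛ x y hPxy i))
    have hite : ∀ i, (if keepS π P (S i) (restr (S i) x) (restr (S i) y) = 0 then 0
        else Real.log (keepS π P (S i) (restr (S i) x) (restr (S i) y) /
          Λ i (restr (S i) x) (restr (S i) y)))
        = Real.log (keepS π P (S i) (restr (S i) x) (restr (S i) y))
          - Real.log (Λ i (restr (S i) x) (restr (S i) y)) := by
      intro i
      rw [if_neg (hkpos i).ne', Real.log_div (hkpos i).ne' (hΛpos i).ne']
    simp only [hite]
    unfold klR tensorBlocks
    rw [if_neg hPxy, if_neg hPxy,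
      Real.log_div hPxy (Finset.prod_ne_zero_iff.2 fun i _ => (hΛpos i).ne'),
      Real.log_div hPxy (Finset.prod_ne_zero_iff.2 fun i _ => (hkpos i).ne'),
      Real.log_prod (fun i _ => (hΛpos i).ne'),
      Real.log_prod (fun i _ => (hkpos i).ne'),
      Finset.sum_sub_distrib]
    ring

end Core

section Bounds

lemma klTerm_ge {m l : ℝ} (hm : 0 ≤ m) (hl : 0 ≤ l) (hl1 : l ≤ 1) :
    ((-1 : ℝ) : EReal) ≤ klTerm m l := by
  unfold klTerm
  split_ifs with h1 h2
  · exact (EReal.coe_le_coe_iff.2 (by norm_num : (-1:ℝ) ≤ 0)).trans_eq EReal.coe_zero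
  · exact le_top
  · rw [EReal.coe_le_coe_iff]
    have hm0 : 0 < m := lt_of_le_of_ne hm (Ne.symm h1)
    have hl0 : 0 < l := lt_of_le_of_ne hl (Ne.symm h2)
    have h3 : -Real.log m ≤ m⁻¹ - 1 := by
      have := Real.log_le_sub_one_of_pos (inv_pos.2 hm0)
      rwa [Real.log_inv] at this
    have h4 : Real.log m ≤ Real.log (m / l) := by
      refine Real.log_le_log hm0 ?_
      rw [le_div_iff₀ hl0]
      exact mul_le_of_le_one_right hm hl1
    have h5 : m * Real.log m ≤ m * Real.log (m / l) :=
      mul_le_mul_of_nonneg_left h4 hm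
    have h6 : m * (1 - m⁻¹) ≤ m * Real.log m := by
      have : 1 - m⁻¹ ≤ Real.log m := by linarith
      exact mul_le_mul_of_nonneg_left this hm
    have h7 : m * (1 - m⁻¹) = m - 1 := by
      field_simp
    nlinarith

lemma ecoe_mul_le {r t : ℝ} (hr : 0 ≤ r) {b : EReal} (hb : ((t : ℝ) : EReal) ≤ b) :
    ((r * t : ℝ) : EReal) ≤ (r : EReal) * b := by
  induction b with
  | bot => exact absurd (le_bot_iff.1 hb) (EReal.coe_ne_bot t)
  | coe s =>
      rw [← EReal.coe_mul, EReal.coe_le_coe_iff]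
      exact mul_le_mul_of_nonneg_left (EReal.coe_le_coe_iff.1 hb) hr
  | top =>
      rcases hr.eq_or_lt with h | h
      · rw [← h]
        simp [EReal.zero_mul]
      · rw [EReal.coe_mul_top_of_pos h]
        exact le_top

lemma klDiv_ge {Y : Type*} [Fintype Y] (π' : Y → ℝ) (M L : Y → Y → ℝ)
    (hπ : ∀ a, 0 ≤ π' a) (hπ1 : ∑ a, π' a = 1)
    (hM : ∀ x y, 0 ≤ M x y) (hL : ∀ x y, 0 ≤ L x y ∧ L x y ≤ 1) :
    ((-(Fintype.card Y : ℝ)) : EReal) ≤ klDiv π' M L := by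
  have hcard : ∀ x : Y, ((-(Fintype.card Y : ℝ) : ℝ) : EReal)
      ≤ ∑ y, klTerm (M x y) (L x y) := by
    intro x
    have h1 : ((-(Fintype.card Y : ℝ) : ℝ) : EReal) = ∑ _y : Y, ((-1 : ℝ) : EReal) := by
      rw [← ecoe_sum]
      norm_num
    rw [h1]
    exact Finset.sum_le_sum fun y _ => klTerm_ge (hM x y) (hL x y).1 (hL x y).2
  have key : ∀ x : Y, ((π' x * -(Fintype.card Y : ℝ) : ℝ) : EReal)
      ≤ (π' x : EReal) * ∑ y, klTerm (M x y) (L x y) :=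
    fun x => ecoe_mul_le (hπ x) (hcard x)
  calc ((-(Fintype.card Y : ℝ)) : EReal)
      = ∑ x, ((π' x * -(Fintype.card Y : ℝ) : ℝ) : EReal) := by
        rw [← ecoe_sum, ← Finset.sum_mul, hπ1, one_mul, EReal.coe_neg]
    _ ≤ klDiv π' M L := Finset.sum_le_sum fun x _ => key x

lemma trans_entry_le_one {Y : Type*} [Fintype Y] {M : Y → Y → ℝ}
    (h1 : ∀ x y, 0 ≤ M x y) (h2 : ∀ x, ∑ y, M x y = 1) (x y : Y) : M x y ≤ 1 := by
  have := Finset.single_le_sum (f := M x) (fun z _ => h1 x z) (Finset.mem_univ y)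
  rwa [h2 x] at this

lemma unif_trans (Z : Type*) [Fintype Z] [Nonempty Z] :
    (∀ x y : Z, 0 ≤ (Fintype.card Z : ℝ)⁻¹) ∧
      ∀ _x : Z, ∑ _y : Z, (Fintype.card Z : ℝ)⁻¹ = 1 := by
  constructor
  · intro _ _; positivity
  · intro _
    rw [Finset.sum_const, Finset.card_univ, nsmul_eq_mul,
      mul_inv_cancel₀ (by exact_mod_cast Fintype.card_pos.ne')]

lemma ereal_le_coe_of_forall {a : EReal} {b : ℝ}
    (h : ∀ δ : ℝ, 0 < δ → a ≤ ((b + δ : ℝ) : EReal)) : a ≤ (b : EReal) := by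
  induction a with
  | bot => exact bot_le
  | top => exact absurd (h 1 one_pos) (EReal.coe_lt_top _).not_ge
  | coe t =>
      rw [EReal.coe_le_coe_iff]
      refine le_of_forall_pos_le_add fun δ hδ => ?_
      exact EReal.coe_le_coe_iff.1 (h δ hδ)

end Bounds

lemma margS_sum {d : ℕ} {X : Fin d → Type*} [∀ i, Fintype (X i)]
    (π : (∀ i, X i) → ℝ) (S : Finset (Fin d)) :
    ∑ xs, margS π S xs = ∑ x, π x := by
  simp only [margS_apply]
  rw [Finset.sum_comm]
  refine Finset.sum_congr rfl fun x _ => ?_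
  exact (Finset.sum_ite_eq Finset.univ (restr S x) (fun _ => π x)).trans
    (if_pos (Finset.mem_univ _))

set_option maxHeartbeats 1000000 in
/-- Decomposition of the distance to independence: `𝕀^π(P)` equals the distance to
`(Sᵢ)`-factorizability of `P` plus the sum of the distances to independence of the
keep-`Sᵢ`-in transition matrices. -/
theorem stmt15 {d n : ℕ} {X : Fin d → Type*} [∀ i, Fintype (X i)]
    (S : Fin n → Finset (Fin d)) (hne : ∀ i, (S i).Nonempty)
    (hdisj : ∀ i i', i ≠ i' → Disjoint (S i) (S i'))
    (hcov : ∀ j : Fin d, ∃ i, j ∈ S i)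
    (π : (∀ i, X i) → ℝ) (hπ : IsProbMass π) (hpos : ∀ x, 0 < π x)
    (P : (∀ i, X i) → (∀ i, X i) → ℝ) (hP : IsTransMat P) :
    distIndepKL π P =
      klDiv π P (tensorBlocks S fun i => keepS π P (S i)) +
        ∑ i, distIndepOn (S i) (margS π (S i)) (keepS π P (S i)) := by
  obtain ⟨hπ1, hπ2⟩ := hπ
  obtain ⟨hP1, hP2⟩ := hP
  have hP' : (∀ x y, 0 ≤ P x y) ∧ ∀ x, ∑ y, P x y = 1 := ⟨hP1, hP2⟩
  haveI hNE : Nonempty (∀ i, X i) := nonempty_of_pos hpos hπ2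
  have x0 : ∀ i, X i := Classical.arbitrary _
  haveI : ∀ j : Fin d, Nonempty (X j) := fun j => ⟨x0 j⟩
  -- the keep-in matrices are transition matrices
  have hKnn : ∀ (i : Fin n) xs ys, 0 ≤ keepS π P (S i) xs ys :=
    fun i xs ys => keepS_nonneg (S i) hpos hP' xs ys
  have hKrs : ∀ (i : Fin n) xs, ∑ ys, keepS π P (S i) xs ys = 1 :=
    fun i xs => keepS_rowsum (S i) hpos hP' xs
  -- the distance-to-factorizability term is a finite real
  have hC : klDiv π P (tensorBlocks S fun i => keepS π P (S i))
      = ((klDivR π P (tensorBlocks S fun i => keepS π P (S i)) : ℝ) : EReal) := by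
    refine klDiv_coe _ _ _ fun x y hxy => ?_
    exact (Finset.prod_pos fun i _ => keepS_pos (S i) hpos hP' hxy).ne'
  -- each block distance to independence is a finite real
  have hIfin : ∀ i : Fin n, ∃ r : ℝ,
      distIndepOn (S i) (margS π (S i)) (keepS π P (S i)) = (r : EReal) := by
    intro i
    have hub : distIndepOn (S i) (margS π (S i)) (keepS π P (S i)) ≠ ⊤ := by
      unfold distIndepOn
      have hU : ∀ j : S i, IsTransMat (fun _ _ : X j.1 => (Fintype.card (X j.1) : ℝ)⁻¹) :=
        fun j => ⟨fun _ _ => by positivity, (unif_trans (X j.1)).2⟩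
      refine ne_top_of_le_ne_top ?_
        (iInf₂_le (fun j => fun _ _ => (Fintype.card (X j.1) : ℝ)⁻¹) hU)
      rw [klDiv_coe _ _ _ (fun xs ys _ => (Finset.prod_pos fun j _ => by positivity).ne')]
      exact EReal.coe_ne_top _
    have hlb : distIndepOn (S i) (margS π (S i)) (keepS π P (S i)) ≠ ⊥ := by
      have h1 : ((-(Fintype.card (∀ j : S i, X j.1) : ℝ)) : EReal)
          ≤ distIndepOn (S i) (margS π (S i)) (keepS π P (S i)) := by
        unfold distIndepOn
        refine le_iInf fun Lb => le_iInf fun hLb => ?_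
        refine klDiv_ge _ _ _ (fun xs => (margS_pos (S i) hpos xs).le)
          ((margS_sum π (S i)).trans hπ2) (hKnn i) fun xs ys => ?_
        constructor
        · exact Finset.prod_nonneg fun j _ => (hLb j).1 _ _
        · exact Finset.prod_le_one (fun j _ => (hLb j).1 _ _)
            (fun j _ => trans_entry_le_one (hLb j).1 (hLb j).2 _ _)
      exact fun h0 => by rw [h0] at h1; exact absurd (le_bot_iff.1 h1) (by simp)
    exact ⟨_, (EReal.coe_toReal hub hlb).symm⟩
  choose r hr using hIfin
  -- helper: a block family with finite divergence is nonzero where keep is nonzero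
  have hblock : ∀ (i : Fin n) (Lb : ∀ j : S i, X j.1 → X j.1 → ℝ),
      klDiv (margS π (S i)) (keepS π P (S i))
          (fun xs ys => ∏ j, Lb j (xs j) (ys j)) ≠ ⊤ →
        ∀ xs ys, keepS π P (S i) xs ys ≠ 0 → (∏ j, Lb j (xs j) (ys j)) ≠ 0 := by
    intro i Lb htop xs ys hk h0
    exact htop (klDiv_eq_top _ _ _ (margS_pos (S i) hpos) hk h0)
  rw [hC]
  have hrw : ∀ i : Fin n, distIndepOn (S i) (margS π (S i)) (keepS π P (S i))
      = ((r i : ℝ) : EReal) := hr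
  simp only [hrw]
  rw [← ecoe_sum, ← EReal.coe_add]
  refine le_antisymm ?_ ?_
  · -- distIndepKL ≤ CR + ∑ r
    refine ereal_le_coe_of_forall fun δ hδ => ?_
    set δ' : ℝ := δ / (n + 1) with hδ'def
    have hδ' : 0 < δ' := by positivity
    have hex : ∀ i : Fin n, ∃ Lb : ∀ j : S i, X j.1 → X j.1 → ℝ,
        (∀ j, IsTransMat (Lb j)) ∧
          klDiv (margS π (S i)) (keepS π P (S i))
            (fun xs ys => ∏ j, Lb j (xs j) (ys j)) < ((r i + δ' : ℝ) : EReal) := by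
      intro i
      have h1 : distIndepOn (S i) (margS π (S i)) (keepS π P (S i))
          < ((r i + δ' : ℝ) : EReal) := by
        rw [hr i]
        exact EReal.coe_lt_coe_iff.2 (by linarith)
      unfold distIndepOn at h1
      rw [iInf_lt_iff] at h1
      obtain ⟨Lb, h1⟩ := h1
      rw [iInf_lt_iff] at h1
      obtain ⟨hLb, h1⟩ := h1
      exact ⟨Lb, hLb, h1⟩
    choose Lb hLb1 hLb2 using hex
    set L : ∀ j : Fin d, X j → X j → ℝ :=
      fun j => Lb (hcov j).choose ⟨j, (hcov j).choose_spec⟩ with hLdef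
    have hLt : ∀ j, IsTransMat (L j) := fun j => hLb1 _ _
    have key : ∀ (c i : Fin n) (jj : Fin d) (hc : jj ∈ S c) (hi : jj ∈ S i),
        c = i → Lb c ⟨jj, hc⟩ = Lb i ⟨jj, hi⟩ := by
      intro c i jj hc hi e
      subst e
      rfl
    have hΛeq : ∀ (i : Fin n) (xs ys : ∀ j : S i, X j.1),
        (∏ j, L j.1 (xs j) (ys j)) = ∏ j, Lb i j (xs j) (ys j) := by
      refine fun i xs ys => Finset.prod_congr rfl fun j _ => ?_
      have e : (hcov j.1).choose = i := by
        by_contra h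
        exact Finset.disjoint_left.1 (hdisj _ i h) (hcov j.1).choose_spec j.2
      have hk := key _ i j.1 (hcov j.1).choose_spec j.2 e
      show Lb (hcov j.1).choose ⟨j.1, (hcov j.1).choose_spec⟩ (xs j) (ys j)
        = Lb i j (xs j) (ys j)
      rw [hk]
    have hne_i : ∀ (i : Fin n) xs ys, keepS π P (S i) xs ys ≠ 0 →
        (∏ j, Lb i j (xs j) (ys j)) ≠ 0 :=
      fun i => hblock i (Lb i) (hLb2 i).ne_top
    have hΛnn : ∀ (i : Fin n) (xs ys : ∀ j : S i, X j.1),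
        0 ≤ ∏ j, L j.1 (xs j) (ys j) :=
      fun i xs ys => Finset.prod_nonneg fun j _ => (hLt j.1).1 _ _
    have hΛne : ∀ x y, P x y ≠ 0 → ∀ i : Fin n,
        (∏ j : S i, L j.1 (restr (S i) x j) (restr (S i) y j)) ≠ 0 := by
      intro x y hxy i
      rw [hΛeq i]
      exact hne_i i _ _ (keepS_pos (S i) hpos hP' hxy).ne'
    have hmain : distIndepKL π P ≤
        ((klDivR π P (tensorBlocks S (fun i => keepS π P (S i)))
          + ∑ i, klDivR (margS π (S i)) (keepS π P (S i))
              (fun xs ys => ∏ j : S i, L j.1 (xs j) (ys j)) : ℝ) : EReal) := by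
      have hTB : ∀ x y, P x y ≠ 0 →
          tensorBlocks S (fun i xs ys => ∏ j : S i, L j.1 (xs j) (ys j)) x y ≠ 0 := by
        intro x y hxy
        show (∏ i, ∏ j : S i, L j.1 (restr (S i) x j) (restr (S i) y j)) ≠ 0
        exact Finset.prod_ne_zero_iff.2 fun i _ => hΛne x y hxy i
      unfold distIndepKL
      refine le_trans (iInf₂_le L hLt) ?_
      rw [tensorMat_eq_blocks S hdisj hcov L,
        klDiv_coe π P (tensorBlocks S (fun i xs ys => ∏ j : S i, L j.1 (xs j) (ys j))) hTB,
        EReal.coe_le_coe_iff]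
      exact le_of_eq (core_identity S hpos hP'
        (fun i xs ys => ∏ j : S i, L j.1 (xs j) (ys j)) hΛnn hΛne)
    have hDR : ∀ i : Fin n, klDivR (margS π (S i)) (keepS π P (S i))
        (fun xs ys => ∏ j : S i, L j.1 (xs j) (ys j)) ≤ r i + δ' := by
      intro i
      have h2 : klDiv (margS π (S i)) (keepS π P (S i))
          (fun (xs ys : ∀ j : S i, X j.1) => ∏ j, Lb i j (xs j) (ys j))
          = ((klDivR (margS π (S i)) (keepS π P (S i))
              (fun (xs ys : ∀ j : S i, X j.1) => ∏ j, Lb i j (xs j) (ys j)) : ℝ) : EReal) :=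
        klDiv_coe _ _ _ (fun xs ys hk => hne_i i xs ys hk)
      have h3 := hLb2 i
      rw [h2, EReal.coe_lt_coe_iff] at h3
      have h4 : (fun (xs ys : ∀ j : S i, X j.1) => ∏ j : S i, L j.1 (xs j) (ys j))
          = (fun (xs ys : ∀ j : S i, X j.1) => ∏ j : S i, Lb i j (xs j) (ys j)) :=
        funext fun xs => funext fun ys => hΛeq i xs ys
      rw [h4]
      exact h3.le
    refine hmain.trans (EReal.coe_le_coe_iff.2 ?_)
    have h5 : ∑ i, klDivR (margS π (S i)) (keepS π P (S i))
        (fun xs ys => ∏ j : S i, L j.1 (xs j) (ys j)) ≤ ∑ i, (r i + δ') :=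
      Finset.sum_le_sum fun i _ => hDR i
    have h6 : ∑ i : Fin n, (r i + δ') = (∑ i, r i) + n * δ' := by
      rw [Finset.sum_add_distrib, Finset.sum_const, Finset.card_univ, Fintype.card_fin,
        nsmul_eq_mul]
    have h7 : (n : ℝ) * δ' ≤ δ := by
      rw [hδ'def]
      rw [mul_div_assoc'] -- n * (δ/(n+1)) = n*δ/(n+1)
      rw [div_le_iff₀ (by positivity : (0:ℝ) < (n : ℝ) + 1)]
      nlinarith [hδ.le]
    linarith
  · -- CR + ∑ r ≤ distIndepKL
    unfold distIndepKL
    refine le_iInf fun L => le_iInf fun hLt => ?_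
    by_cases hz : ∃ x y, P x y ≠ 0 ∧ tensorMat L x y = 0
    · obtain ⟨x, y, hxy, h0⟩ := hz
      rw [klDiv_eq_top π P (tensorMat L) hpos hxy h0]
      exact le_top
    · push_neg at hz
      have hΛnn : ∀ (i : Fin n) (xs ys : ∀ j : S i, X j.1),
          0 ≤ ∏ j, L j.1 (xs j) (ys j) :=
        fun i xs ys => Finset.prod_nonneg fun j _ => (hLt j.1).1 _ _
      have hΛne : ∀ x y, P x y ≠ 0 → ∀ i : Fin n,
          (∏ j : S i, L j.1 (restr (S i) x j) (restr (S i) y j)) ≠ 0 := by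
        intro x y hxy i
        have h0 := hz x y hxy
        rw [tensorMat_eq_blocks S hdisj hcov L] at h0
        exact fun hh => h0 (Finset.prod_eq_zero (Finset.mem_univ i) hh)
      have hTB : ∀ x y, P x y ≠ 0 →
          tensorBlocks S (fun i xs ys => ∏ j : S i, L j.1 (xs j) (ys j)) x y ≠ 0 := by
        intro x y hxy
        show (∏ i, ∏ j : S i, L j.1 (restr (S i) x j) (restr (S i) y j)) ≠ 0
        exact Finset.prod_ne_zero_iff.2 fun i _ => hΛne x y hxy i
      rw [tensorMat_eq_blocks S hdisj hcov L,
        klDiv_coe π P (tensorBlocks S (fun i xs ys => ∏ j : S i, L j.1 (xs j) (ys j))) hTB,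
        core_identity S hpos hP' (fun i xs ys => ∏ j : S i, L j.1 (xs j) (ys j)) hΛnn hΛne,
        EReal.coe_le_coe_iff]
      have hri : ∀ i : Fin n, r i ≤ klDivR (margS π (S i)) (keepS π P (S i))
          (fun xs ys => ∏ j : S i, L j.1 (xs j) (ys j)) := by
        intro i
        have hcond : ∀ xs ys, keepS π P (S i) xs ys ≠ 0 →
            ((fun xs ys => ∏ j : S i, L j.1 (xs j) (ys j)) xs ys) ≠ 0 := by
          intro xs ys hk
          obtain ⟨x, y, hrx, hry, hxy⟩ := keepS_ne_zero (S i) hpos hP' hk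
          show (∏ j : S i, L j.1 (xs j) (ys j)) ≠ 0
          rw [← hrx, ← hry]
          exact hΛne x y hxy i
        have hle : ((r i : ℝ) : EReal) ≤ ((klDivR (margS π (S i)) (keepS π P (S i))
            (fun xs ys => ∏ j : S i, L j.1 (xs j) (ys j)) : ℝ) : EReal) := by
          rw [← hr i]
          unfold distIndepOn
          exact (iInf₂_le (fun j : S i => L j.1) (fun j : S i => hLt j.1)).trans_eq
            (klDiv_coe _ _ _ hcond)
        exact EReal.coe_le_coe_iff.1 hle
      have := Finset.sum_le_sum fun i (_ : i ∈ Finset.univ) => hri i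
      linarith
end
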